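/- arXiv:1209.1547 — 4 statements merged into one kernel-verified Lean document; each statement's English description precedes it below -/
import Mathlib

section
/- As z → ∞ (z real), the integral K(z) = ∫₀^∞ exp(−z·cosh t) dt satisfies K(z)·e^z·√(2z/π) → 1, i.e. K(z) ~ √(π/(2z))·e^{−z}. -/
open Real MeasureTheory Set Filter

lemma subst_eq (z : ℝ) (hz : 0 < z) :
    ∫ v in Ioi (0:ℝ), Real.exp (-v^2) / Real.sqrt (1 + v^2/(2*z))
      = Real.sqrt (2*z) / 2 * ∫ t in Ioi (0:ℝ), Real.exp (-z * (Real.cosh t - 1)) := by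
  have h2z : (0:ℝ) < 2 * z := by linarith
  have hs : Real.sqrt (2*z) ≠ 0 := by positivity
  set f : ℝ → ℝ := fun t => Real.sqrt (2*z) * Real.sinh (t/2) with hf
  have himg : f '' Ioi 0 = Ioi 0 := by
    ext v
    constructor
    · rintro ⟨t, ht, rfl⟩
      have : 0 < Real.sinh (t/2) := Real.sinh_pos_iff.mpr (by simpa using half_pos (show (0:ℝ) < t from ht))
      exact mul_pos (by positivity) this
    · intro hv
      refine ⟨2 * Real.arsinh (v / Real.sqrt (2*z)), ?_, ?_⟩
      · have : 0 < v / Real.sqrt (2*z) := div_pos hv (by positivity)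
        have := Real.arsinh_pos_iff.mpr this
        simp only [mem_Ioi]; linarith
      · simp [hf, Real.sinh_arsinh, mul_div_assoc, mul_div_cancel_left₀ _ (two_ne_zero),
          mul_div_cancel₀ _ hs]
        field_simp
  have hderiv : ∀ t ∈ Ioi (0:ℝ),
      HasDerivWithinAt f (Real.sqrt (2*z) * (Real.cosh (t/2) * (1/2))) (Ioi 0) t := by
    intro t _
    have h1 : HasDerivAt (fun t : ℝ => Real.sinh (t/2)) (Real.cosh (t/2) * (1/2)) t := by
      have := (Real.hasDerivAt_sinh (t/2)).comp t ((hasDerivAt_id t).div_const 2)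
      simpa [Function.comp_def] using this
    exact ((h1.const_mul (Real.sqrt (2*z))).hasDerivWithinAt).congr_deriv (by ring)
  have hinj : InjOn f (Ioi 0) := by
    intro a _ b _ hab
    have := mul_left_cancel₀ hs hab
    have := Real.sinh_injective this
    linarith
  have key := integral_image_eq_integral_abs_deriv_smul measurableSet_Ioi hderiv hinj
    (fun v => Real.exp (-v^2) / Real.sqrt (1 + v^2/(2*z)))
  rw [himg] at key
  rw [key]
  rw [← MeasureTheory.integral_const_mul]
  refine setIntegral_congr_fun measurableSet_Ioi (fun t ht => ?_)
  have hch : 0 < Real.cosh (t/2) := Real.cosh_pos _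
  have hsq : (f t)^2 = 2*z * Real.sinh (t/2)^2 := by
    rw [hf]; rw [mul_pow, Real.sq_sqrt h2z.le]
  have h1 : 1 + (f t)^2/(2*z) = Real.cosh (t/2)^2 := by
    rw [hsq]; field_simp; rw [Real.cosh_sq]; ring
  have hsqrt : Real.sqrt (1 + (f t)^2/(2*z)) = Real.cosh (t/2) := by
    rw [h1, Real.sqrt_sq hch.le]
  have hcosh : Real.cosh t = 1 + 2 * Real.sinh (t/2)^2 := by
    have := Real.cosh_two_mul (t/2)
    have ht2 : 2 * (t/2) = t := by ring
    rw [ht2] at this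
    rw [this, Real.cosh_sq]; ring
  have habs : |Real.sqrt (2*z) * (Real.cosh (t/2) * (1/2))| 
      = Real.sqrt (2*z) * (Real.cosh (t/2) * (1/2)) := abs_of_pos (by positivity)
  rw [smul_eq_mul, habs, hsqrt]
  rw [show -(f t)^2 = -z * (Real.cosh t - 1) by rw [hsq, hcosh]; ring]
  field_simp

lemma eq_form (z : ℝ) (hz : 0 < z) :
    (∫ t in Ici (0:ℝ), Real.exp (-z * Real.cosh t)) * Real.exp z * Real.sqrt (2 * z / π)
      = (2 / Real.sqrt π) * ∫ v in Ioi (0:ℝ), Real.exp (-v^2) / Real.sqrt (1 + v^2/(2*z)) := by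
  rw [integral_Ici_eq_integral_Ioi, ← integral_mul_const]
  have h1 : ∀ t : ℝ, Real.exp (-z * Real.cosh t) * Real.exp z = Real.exp (-z * (Real.cosh t - 1)) := by
    intro t; rw [← Real.exp_add]; ring_nf
  simp_rw [h1]
  rw [subst_eq z hz]
  have hπ : (0:ℝ) < π := Real.pi_pos
  rw [Real.sqrt_div (by positivity : (0:ℝ) ≤ 2*z) π]
  have h2 : Real.sqrt π ≠ 0 := by positivity
  field_simp

lemma tendsto_inner :
    Tendsto (fun z : ℝ => ∫ v in Ioi (0:ℝ), Real.exp (-v^2) / Real.sqrt (1 + v^2/(2*z)))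
      atTop (nhds (∫ v in Ioi (0:ℝ), Real.exp (-v^2))) := by
  apply MeasureTheory.tendsto_integral_filter_of_dominated_convergence
    (fun v => Real.exp (-v^2))
  · filter_upwards [eventually_gt_atTop (0:ℝ)] with z hz
    apply Continuous.aestronglyMeasurable
    have h : ∀ v : ℝ, 0 < 1 + v^2/(2*z) := fun v => by positivity
    exact (Real.continuous_exp.comp (continuous_pow 2).neg).div
      (Real.continuous_sqrt.comp (continuous_const.add ((continuous_pow 2).div_const (2*z))))
      (fun v => (Real.sqrt_pos.mpr (h v)).ne')
  · filter_upwards [eventually_gt_atTop (0:ℝ)] with z hz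
    filter_upwards [ae_restrict_mem measurableSet_Ioi] with v hv
    have h1 : (1:ℝ) ≤ Real.sqrt (1 + v^2/(2*z)) := by
      have := Real.sqrt_le_sqrt (show (1:ℝ) ≤ 1 + v^2/(2*z) from
        le_add_of_nonneg_right (by positivity))
      simpa using this
    rw [Real.norm_eq_abs, abs_of_nonneg (by positivity)]
    exact div_le_self (by positivity) h1
  · have := integrable_exp_neg_mul_sq (show (0:ℝ) < 1 by norm_num)
    simpa using this.restrict (s := Ioi 0)
  · filter_upwards [ae_restrict_mem measurableSet_Ioi] with v hv
    have h2z : Tendsto (fun z : ℝ => 2*z) atTop atTop :=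
      tendsto_id.const_mul_atTop two_pos
    have h1 : Tendsto (fun z : ℝ => v^2/(2*z)) atTop (nhds 0) :=
      Tendsto.div_atTop tendsto_const_nhds h2z
    have h2 : Tendsto (fun z : ℝ => Real.sqrt (1 + v^2/(2*z))) atTop (nhds 1) := by
      have hadd : Tendsto (fun z : ℝ => 1 + v^2/(2*z)) atTop (nhds 1) := by
        simpa using (tendsto_const_nhds (x := (1:ℝ))).add h1
      have := (Real.continuous_sqrt.tendsto 1).comp hadd
      simpa [Function.comp_def] using this
    have := (tendsto_const_nhds (x := Real.exp (-v^2))).div h2 one_ne_zero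
    simpa [Pi.div_def] using this

theorem stmt_3 :
    Tendsto (fun z : ℝ =>
        (∫ t in Ici (0:ℝ), Real.exp (-z * Real.cosh t)) * Real.exp z * Real.sqrt (2 * z / π))
      atTop (nhds 1) := by
  have hπ : (0:ℝ) < π := Real.pi_pos
  have hG : ∫ v in Ioi (0:ℝ), Real.exp (-v^2) = Real.sqrt π / 2 := by
    have := integral_gaussian_Ioi 1
    simpa using this
  have hlim : Tendsto (fun z : ℝ =>
      (2 / Real.sqrt π) * ∫ v in Ioi (0:ℝ), Real.exp (-v^2) / Real.sqrt (1 + v^2/(2*z)))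
      atTop (nhds 1) := by
    have := (tendsto_const_nhds (x := 2 / Real.sqrt π)).mul tendsto_inner
    rw [hG] at this
    have h2 : 2 / Real.sqrt π * (Real.sqrt π / 2) = 1 := by
      have : Real.sqrt π ≠ 0 := by positivity
      field_simp
    rwa [h2] at this
  apply hlim.congr'
  filter_upwards [eventually_gt_atTop (0:ℝ)] with z hz
  exact (eq_form z hz).symm
end

section
/- For the Gaussian f(x) = exp(−x²), the trapezoidal-rule error satisfies |∑_{n∈ℤ} h·exp(−n²h²) − √π| ≤ 2√π · exp(−π²/h²) / (1 − exp(−3π²/h²)) for all h with 0 < h < π. -/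
open Real

theorem stmt_6 (h : ℝ) (h0 : 0 < h) (hπ : h < π) :
    |(∑' n : ℤ, h * Real.exp (-(n : ℝ) ^ 2 * h ^ 2)) - Real.sqrt π|
      ≤ 2 * Real.sqrt π * Real.exp (-π ^ 2 / h ^ 2) / (1 - Real.exp (-3 * π ^ 2 / h ^ 2)) := by
  set c : ℝ := π ^ 2 / h ^ 2 with hc
  have hcpos : 0 < c := div_pos (pow_pos pi_pos 2) (pow_pos h0 2)
  have hr0 : (0:ℝ) ≤ Real.exp (-(3 * c)) := (Real.exp_pos _).le
  have hr1 : Real.exp (-(3 * c)) < 1 := by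
    rw [Real.exp_lt_one_iff]; linarith
  have hgeo : Summable fun n : ℕ => Real.exp (-c) * Real.exp (-(3 * c)) ^ n :=
    (summable_geometric_of_lt_one hr0 hr1).mul_left _
  have hle : ∀ n : ℕ, Real.exp (-c * ((n : ℝ) + 1) ^ 2) ≤
      Real.exp (-c) * Real.exp (-(3 * c)) ^ n := by
    intro n
    rw [← Real.exp_nat_mul, ← Real.exp_add, Real.exp_le_exp]
    have hnn : (n : ℝ) ≤ (n : ℝ) ^ 2 := by
      exact_mod_cast Nat.le_self_pow (by norm_num) n
    nlinarith [hcpos, mul_nonneg hcpos.le (sub_nonneg.mpr hnn)]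
  have hS : Summable fun n : ℕ => Real.exp (-c * ((n : ℝ) + 1) ^ 2) :=
    Summable.of_nonneg_of_le (fun n => (Real.exp_pos _).le) hle hgeo
  have hSbound : (∑' n : ℕ, Real.exp (-c * ((n : ℝ) + 1) ^ 2)) ≤
      Real.exp (-c) / (1 - Real.exp (-(3 * c))) := by
    calc (∑' n : ℕ, Real.exp (-c * ((n : ℝ) + 1) ^ 2))
        ≤ ∑' n : ℕ, Real.exp (-c) * Real.exp (-(3 * c)) ^ n := Summable.tsum_le_tsum hle hS hgeo
      _ = Real.exp (-c) * (1 - Real.exp (-(3 * c)))⁻¹ := by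
          rw [tsum_mul_left, tsum_geometric_of_lt_one hr0 hr1]
      _ = Real.exp (-c) / (1 - Real.exp (-(3 * c))) := by rw [div_eq_mul_inv]
  have hSnonneg : 0 ≤ (∑' n : ℕ, Real.exp (-c * ((n : ℝ) + 1) ^ 2)) :=
    tsum_nonneg fun n => (Real.exp_pos _).le
  -- Poisson summation
  have ha : (0:ℝ) < h ^ 2 / π := div_pos (pow_pos h0 2) pi_pos
  have hpoisson := Real.tsum_exp_neg_mul_int_sq ha
  have hsqrt : ((h ^ 2 / π) ^ (1 / 2 : ℝ)) = h / Real.sqrt π := by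
    rw [← Real.sqrt_eq_rpow, Real.sqrt_div (sq_nonneg h), Real.sqrt_sq h0.le]
  have key1 : (∑' n : ℤ, Real.exp (-(n : ℝ) ^ 2 * h ^ 2)) =
      Real.sqrt π / h * (∑' n : ℤ, Real.exp (-c * (n : ℝ) ^ 2)) := by
    have e1 : ∀ n : ℤ, Real.exp (-π * (h ^ 2 / π) * (n : ℝ) ^ 2)
        = Real.exp (-(n : ℝ) ^ 2 * h ^ 2) := by
      intro n; rw [Real.exp_eq_exp]; field_simp
    have e2 : ∀ n : ℤ, Real.exp (-π / (h ^ 2 / π) * (n : ℝ) ^ 2)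
        = Real.exp (-c * (n : ℝ) ^ 2) := by
      intro n
      have hd : -π / (h ^ 2 / π) = -c := by rw [hc]; field_simp
      rw [hd]
    rw [← tsum_congr e1, hpoisson, tsum_congr e2, hsqrt, one_div_div]
  -- split the ℤ sum
  have e : ∀ n : ℕ, Real.exp (-c * (((n : ℤ) + 1 : ℤ) : ℝ) ^ 2)
      = Real.exp (-c * ((n : ℝ) + 1) ^ 2) := by
    intro n; rw [Real.exp_eq_exp]; push_cast; ring
  have e' : ∀ n : ℕ, Real.exp (-c * ((-((n : ℤ) + 1) : ℤ) : ℝ) ^ 2)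
      = Real.exp (-c * ((n : ℝ) + 1) ^ 2) := by
    intro n; rw [Real.exp_eq_exp]; push_cast; ring
  have hp : Summable (fun n : ℕ => Real.exp (-c * (((n : ℤ) + 1 : ℤ) : ℝ) ^ 2)) :=
    hS.congr fun n => (e n).symm
  have hn : Summable (fun n : ℕ => Real.exp (-c * ((-((n : ℤ) + 1) : ℤ) : ℝ) ^ 2)) :=
    hS.congr fun n => (e' n).symm
  have hsplit : (∑' n : ℤ, Real.exp (-c * (n : ℝ) ^ 2)) =
      1 + 2 * ∑' n : ℕ, Real.exp (-c * ((n : ℝ) + 1) ^ 2) := by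
    rw [tsum_of_add_one_of_neg_add_one (f := fun n : ℤ => Real.exp (-c * (n : ℝ) ^ 2)) hp hn,
      tsum_congr e, tsum_congr e']
    norm_num
    ring
  have key : (∑' n : ℤ, h * Real.exp (-(n : ℝ) ^ 2 * h ^ 2)) =
      Real.sqrt π * (1 + 2 * ∑' n : ℕ, Real.exp (-c * ((n : ℝ) + 1) ^ 2)) := by
    rw [tsum_mul_left, key1, hsplit]
    field_simp
  rw [key]
  have habs : Real.sqrt π * (1 + 2 * ∑' n : ℕ, Real.exp (-c * ((n : ℝ) + 1) ^ 2)) - Real.sqrt π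
      = 2 * Real.sqrt π * ∑' n : ℕ, Real.exp (-c * ((n : ℝ) + 1) ^ 2) := by ring
  have hsqrtpos : 0 < Real.sqrt π := Real.sqrt_pos.mpr pi_pos
  rw [habs, abs_of_nonneg (by positivity)]
  have e3 : Real.exp (-3 * π ^ 2 / h ^ 2) = Real.exp (-(3 * c)) := by
    rw [Real.exp_eq_exp, hc]; ring
  have e4 : Real.exp (-π ^ 2 / h ^ 2) = Real.exp (-c) := by
    rw [Real.exp_eq_exp, hc]; ring
  rw [e3, e4, mul_div_assoc]
  exact mul_le_mul_of_nonneg_left hSbound (by positivity)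
end

section
/- For z > 0 and ν ∈ ℝ, the map h ↦ ∑_{n=0}^{∞} h·w_n·cosh(ν n h)·exp(−z·cosh(n h)) (with w₀ = 1/2 and w_n = 1 for n ≥ 1) converges to ∫₀^∞ cosh(νt)·exp(−z·cosh t) dt as h → 0⁺. -/
open Real MeasureTheory Set Filter

private lemma aux_cosh_le_exp_abs (x : ℝ) : Real.cosh x ≤ Real.exp |x| := by
  rw [Real.cosh_eq]
  have h1 : Real.exp x ≤ Real.exp |x| := Real.exp_le_exp.2 (le_abs_self x)
  have h2 : Real.exp (-x) ≤ Real.exp |x| := Real.exp_le_exp.2 (neg_le_abs x)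
  linarith

private lemma aux_sq_le_cosh (x : ℝ) : 1 + x^2/2 ≤ Real.cosh x := by
  have h2 : Real.cosh x = 2 * Real.sinh (x/2)^2 + 1 := by
    have h := Real.cosh_two_mul (x/2)
    have hsq := Real.cosh_sq (x/2)
    rw [show 2*(x/2) = x by ring] at h
    rw [h, hsq]; ring
  have h3 : |x/2| ≤ Real.sinh |x/2| := Real.self_le_sinh_iff.2 (abs_nonneg _)
  have h5 : (x/2)^2 ≤ Real.sinh (x/2)^2 := by
    rw [← sq_abs (x/2), ← sq_abs (Real.sinh (x/2)), Real.abs_sinh]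
    exact pow_le_pow_left₀ (abs_nonneg _) h3 2
  nlinarith

section Main
variable (z ν : ℝ)

private noncomputable def ff (t : ℝ) : ℝ := Real.cosh (ν * t) * Real.exp (-z * Real.cosh t)

private noncomputable def gg (t : ℝ) : ℝ :=
  Real.exp (z * Real.cosh 1 + |ν| * t - z * Real.cosh (t - 1))

private lemma ff_nonneg (t : ℝ) : 0 ≤ ff z ν t :=
  mul_nonneg (Real.cosh_pos _).le (Real.exp_pos _).le

private lemma ff_cont : Continuous (ff z ν) := by
  unfold ff; fun_prop

private lemma key_bound (hz : 0 < z) {t s : ℝ} (hs0 : 0 ≤ s) (hst : s ≤ t)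
    (hts : t - 1 ≤ s) : ff z ν s ≤ gg z ν t := by
  have h1 : Real.cosh (ν * s) ≤ Real.exp (|ν| * t) := by
    refine (aux_cosh_le_exp_abs _).trans (Real.exp_le_exp.2 ?_)
    rw [abs_mul, abs_of_nonneg hs0]
    exact mul_le_mul_of_nonneg_left hst (abs_nonneg ν)
  have h2 : Real.cosh (t - 1) ≤ Real.cosh s + Real.cosh 1 := by
    rcases le_or_gt t 1 with h | h
    · have h' : Real.cosh (t - 1) ≤ Real.cosh 1 := by
        rw [Real.cosh_le_cosh, abs_one, abs_le]
        constructor <;> linarith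
      have := Real.cosh_pos (x := s); linarith
    · have h' : Real.cosh (t - 1) ≤ Real.cosh s := by
        rw [Real.cosh_le_cosh, abs_of_nonneg (by linarith : (0:ℝ) ≤ t - 1),
          abs_of_nonneg hs0]
        exact hts
      have := Real.cosh_pos (x := 1); linarith
  have h3 : Real.exp (-z * Real.cosh s) ≤
      Real.exp (z * Real.cosh 1 - z * Real.cosh (t - 1)) := by
    apply Real.exp_le_exp.2; nlinarith
  calc ff z ν s ≤ Real.exp (|ν| * t) * Real.exp (z * Real.cosh 1 - z * Real.cosh (t-1)) :=
        mul_le_mul h1 h3 (Real.exp_pos _).le (Real.exp_pos _).le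
    _ = gg z ν t := by rw [gg, ← Real.exp_add]; ring_nf

private lemma gg_integrable (hz : 0 < z) : IntegrableOn (gg z ν) (Ici 0) := by
  set a : ℝ := |ν| + 1 with ha
  have ha0 : 0 < a := by positivity
  set C : ℝ := Real.exp (z * Real.cosh 1 + a^2/(2*z) + a) with hC
  have hbound : ∀ t ∈ Ici (0:ℝ), ‖gg z ν t‖ ≤ C * Real.exp (-1 * t) := by
    intro t ht
    simp only [mem_Ici] at ht
    rw [Real.norm_eq_abs, gg, abs_of_pos (Real.exp_pos _), hC, ← Real.exp_add]
    apply Real.exp_le_exp.2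
    have hcosh : 1 + (t-1)^2/2 ≤ Real.cosh (t - 1) := aux_sq_le_cosh _
    have key : a * t ≤ z * Real.cosh (t-1) + a^2/(2*z) + a := by
      have h1 : a * (t - 1) ≤ z * (t-1)^2/2 + a^2/(2*z) := by
        rw [div_add_div _ _ (by norm_num : (2:ℝ) ≠ 0) (by positivity : 2*z ≠ 0), le_div_iff₀ (by positivity)]
        nlinarith [sq_nonneg (z*(t-1) - a)]
      nlinarith
    have heq : |ν| * t = a * t - t := by rw [ha]; ring
    linarith
  have hexp : IntegrableOn (fun t => C * Real.exp (-1 * t)) (Ici 0) := by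
    rw [integrableOn_Ici_iff_integrableOn_Ioi]
    exact (exp_neg_integrableOn_Ioi 0 one_pos).const_mul C
  apply Integrable.mono' hexp
  · apply Continuous.aestronglyMeasurable; unfold gg; fun_prop
  · exact (ae_restrict_iff' measurableSet_Ici).2 (ae_of_all _ hbound)

theorem stmt_14 (z ν : ℝ) (hz : 0 < z) :
    Tendsto (fun h : ℝ =>
        ∑' n : ℕ, h * (if n = 0 then (1:ℝ)/2 else 1) *
          Real.cosh (ν * (n * h)) * Real.exp (-z * Real.cosh (n * h)))
      (nhdsWithin 0 (Ioi 0))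
      (nhds (∫ t in Ici (0:ℝ), Real.cosh (ν * t) * Real.exp (-z * Real.cosh t))) := by
  have hint : (∫ t in Ici (0:ℝ), Real.cosh (ν * t) * Real.exp (-z * Real.cosh t))
      = ∫ t in Ici (0:ℝ), ff z ν t := by simp only [ff]
  rw [hint]
  set F : ℝ → ℝ → ℝ := fun h t => ff z ν (h * ⌊t/h⌋) with hF
  have hFmeas : ∀ h : ℝ, Measurable (F h) := by
    intro h
    exact (ff_cont z ν).measurable.comp
      (measurable_const.mul ((measurable_of_countable _).comp
        ((measurable_id.div_const h).floor)))
  -- pointwise bound for 0 < h < 1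
  have hPB : ∀ h ∈ Ioo (0:ℝ) 1, ∀ t ∈ Ici (0:ℝ), |F h t| ≤ gg z ν t := by
    rintro h ⟨hh0, hh1⟩ t ht
    simp only [mem_Ici] at ht
    have hfl0 : (0:ℤ) ≤ ⌊t/h⌋ := Int.floor_nonneg.2 (by positivity)
    have hfl0' : (0:ℝ) ≤ (⌊t/h⌋ : ℝ) := by exact_mod_cast hfl0
    have hs0 : 0 ≤ h * ⌊t/h⌋ := by positivity
    have hst : h * ⌊t/h⌋ ≤ t := by
      rw [mul_comm, ← le_div_iff₀ hh0]; exact Int.floor_le _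
    have hts : t - 1 ≤ h * ⌊t/h⌋ := by
      have h1 : t/h - 1 < (⌊t/h⌋ : ℝ) := Int.sub_one_lt_floor _
      have h2 : (t/h - 1) * h < (⌊t/h⌋ : ℝ) * h := mul_lt_mul_of_pos_right h1 hh0
      have h3 : (t/h - 1) * h = t - h := by field_simp
      nlinarith
    rw [abs_of_nonneg (ff_nonneg z ν _)]
    exact key_bound z ν hz hs0 hst hts
  -- value on each piece
  have hpiece : ∀ h : ℝ, 0 < h → ∀ n : ℕ, ∀ t ∈ Ico ((n:ℝ)*h) (((n:ℝ)+1)*h),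
      F h t = ff z ν ((n:ℝ)*h) := by
    rintro h hh n t ⟨h1, h2⟩
    have hfl : ⌊t/h⌋ = (n:ℤ) := by
      rw [Int.floor_eq_iff]
      constructor
      · rw [le_div_iff₀ hh]; push_cast; exact_mod_cast h1
      · rw [div_lt_iff₀ hh]; push_cast; exact_mod_cast h2
    simp only [hF, hfl]
    push_cast
    rw [mul_comm]
  -- union of pieces
  have hunion : ∀ h : ℝ, 0 < h →
      (⋃ n : ℕ, Ico ((n:ℝ)*h) (((n:ℝ)+1)*h)) = Ici (0:ℝ) := by
    intro h hh
    ext t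
    simp only [mem_iUnion, mem_Ico, mem_Ici]
    constructor
    · rintro ⟨n, h1, _⟩
      have : (0:ℝ) ≤ (n:ℝ)*h := by positivity
      linarith
    · intro ht
      have hfl0 : (0:ℤ) ≤ ⌊t/h⌋ := Int.floor_nonneg.2 (by positivity)
      have hcast : ((⌊t/h⌋.toNat : ℕ) : ℝ) = ((⌊t/h⌋ : ℤ) : ℝ) := by
        exact_mod_cast Int.toNat_of_nonneg hfl0
      refine ⟨⌊t/h⌋.toNat, ?_, ?_⟩
      · rw [hcast, ← le_div_iff₀ hh]; exact Int.floor_le _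
      · rw [hcast, ← div_lt_iff₀ hh]; exact Int.lt_floor_add_one _
  -- disjointness
  have hdisj : ∀ h : ℝ, 0 < h → Pairwise (Function.onFun Disjoint
      (fun n : ℕ => Ico ((n:ℝ)*h) (((n:ℝ)+1)*h))) := by
    intro h hh m n hmn
    rw [Function.onFun, Set.Ico_disjoint_Ico]
    rcases hmn.lt_or_gt with hlt | hlt
    · have : ((m:ℝ)+1) ≤ (n:ℝ) := by exact_mod_cast hlt
      calc min (((m:ℝ)+1)*h) (((n:ℝ)+1)*h) ≤ ((m:ℝ)+1)*h := min_le_left _ _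
        _ ≤ (n:ℝ)*h := by nlinarith
        _ ≤ max ((m:ℝ)*h) ((n:ℝ)*h) := le_max_right _ _
    · have : ((n:ℝ)+1) ≤ (m:ℝ) := by exact_mod_cast hlt
      calc min (((m:ℝ)+1)*h) (((n:ℝ)+1)*h) ≤ ((n:ℝ)+1)*h := min_le_right _ _
        _ ≤ (m:ℝ)*h := by nlinarith
        _ ≤ max ((m:ℝ)*h) ((n:ℝ)*h) := le_max_left _ _
  -- integrability of F h
  have hFint : ∀ h ∈ Ioo (0:ℝ) 1, IntegrableOn (F h) (Ici 0) := by
    intro h hh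
    refine (gg_integrable z ν hz).mono' (hFmeas h).aestronglyMeasurable ?_
    exact (ae_restrict_iff' measurableSet_Ici).2 (ae_of_all _ fun t ht => by
      rw [Real.norm_eq_abs]; exact hPB h hh t ht)
  -- tsum identity
  have hIdent : ∀ h ∈ Ioo (0:ℝ) 1,
      (∑' n : ℕ, h * (if n = 0 then (1:ℝ)/2 else 1) *
          Real.cosh (ν * (n * h)) * Real.exp (-z * Real.cosh (n * h)))
      = (∫ t in Ici (0:ℝ), F h t) - h * (ff z ν 0 / 2) := by
    intro h hh
    have hh0 := hh.1
    have hsum : HasSum (fun n : ℕ => ∫ t in Ico ((n:ℝ)*h) (((n:ℝ)+1)*h), F h t)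
        (∫ t in Ici (0:ℝ), F h t) := by
      have := MeasureTheory.hasSum_integral_iUnion
        (s := fun n : ℕ => Ico ((n:ℝ)*h) (((n:ℝ)+1)*h))
        (fun n => measurableSet_Ico) (hdisj h hh0)
        (by rw [hunion h hh0]; exact hFint h hh)
      rwa [hunion h hh0] at this
    have hval : ∀ n : ℕ, (∫ t in Ico ((n:ℝ)*h) (((n:ℝ)+1)*h), F h t)
        = h * ff z ν ((n:ℝ)*h) := by
      intro n
      rw [setIntegral_congr_fun measurableSet_Ico (hpiece h hh0 n),
        setIntegral_const, Real.volume_real_Ico, smul_eq_mul,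
        max_eq_left (by nlinarith : (0:ℝ) ≤ ((n:ℝ)+1)*h - (n:ℝ)*h)]
      ring_nf
    have hsum' : HasSum (fun n : ℕ => h * ff z ν ((n:ℝ)*h)) (∫ t in Ici (0:ℝ), F h t) := by
      simpa only [hval] using hsum
    have hterm : ∀ n : ℕ, h * (if n = 0 then (1:ℝ)/2 else 1) *
          Real.cosh (ν * (n * h)) * Real.exp (-z * Real.cosh (n * h))
        = h * ff z ν ((n:ℝ)*h) - (if n = 0 then h * (ff z ν 0 / 2) else 0) := by
      intro n
      rcases eq_or_ne n 0 with rfl | hn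
      · simp [ff]; ring
      · simp [ff, hn]; ring
    rw [tsum_congr hterm,
      Summable.tsum_sub hsum'.summable (hasSum_ite_eq 0 (h * (ff z ν 0 / 2))).summable,
      hsum'.tsum_eq, (hasSum_ite_eq 0 (h * (ff z ν 0 / 2))).tsum_eq]
  -- dominated convergence
  have hDCT : Tendsto (fun h => ∫ t in Ici (0:ℝ), F h t) (nhdsWithin 0 (Ioi 0))
      (nhds (∫ t in Ici (0:ℝ), ff z ν t)) := by
    apply MeasureTheory.tendsto_integral_filter_of_dominated_convergence (gg z ν)
    · exact Eventually.of_forall fun h => (hFmeas h).aestronglyMeasurable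
    · filter_upwards [Ioo_mem_nhdsGT_of_mem (by simp : (0:ℝ) ∈ Ico (0:ℝ) 1)] with h hh
      exact (ae_restrict_iff' measurableSet_Ici).2 (ae_of_all _ fun t ht => by
        rw [Real.norm_eq_abs]; exact hPB h hh t ht)
    · exact gg_integrable z ν hz
    · refine (ae_restrict_iff' measurableSet_Ici).2 (ae_of_all _ fun t ht => ?_)
      simp only [mem_Ici] at ht
      have harg : Tendsto (fun h : ℝ => h * (⌊t/h⌋ : ℝ)) (nhdsWithin 0 (Ioi 0)) (nhds t) := by
        have hlow : Tendsto (fun h : ℝ => t - h) (nhdsWithin 0 (Ioi 0)) (nhds t) := by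
          have := (tendsto_const_nhds (x := t) (f := nhdsWithin (0:ℝ) (Ioi 0))).sub
            (tendsto_id.mono_left nhdsWithin_le_nhds)
          simpa using this
        refine tendsto_of_tendsto_of_tendsto_of_le_of_le' hlow tendsto_const_nhds ?_ ?_
        · filter_upwards [self_mem_nhdsWithin] with h hh
          have hh0 : 0 < h := hh
          have h1 : t/h - 1 < (⌊t/h⌋ : ℝ) := Int.sub_one_lt_floor _
          have h2 : (t/h - 1) * h < (⌊t/h⌋ : ℝ) * h := mul_lt_mul_of_pos_right h1 hh0
          have h3 : (t/h - 1) * h = t - h := by field_simp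
          nlinarith
        · filter_upwards [self_mem_nhdsWithin] with h hh
          have hh0 : 0 < h := hh
          rw [mul_comm, ← le_div_iff₀ hh0]; exact Int.floor_le _
      exact ((ff_cont z ν).continuousAt.tendsto).comp harg
  -- combine
  have h2 : Tendsto (fun h : ℝ => h * (ff z ν 0 / 2)) (nhdsWithin 0 (Ioi 0)) (nhds 0) := by
    have := ((tendsto_id.mono_left nhdsWithin_le_nhds :
        Tendsto (fun h : ℝ => h) (nhdsWithin 0 (Ioi 0)) (nhds 0))).mul_const (ff z ν 0 / 2)
    simpa using this
  have hfinal := hDCT.sub h2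
  rw [sub_zero] at hfinal
  apply hfinal.congr'
  filter_upwards [Ioo_mem_nhdsGT_of_mem (by simp : (0:ℝ) ∈ Ico (0:ℝ) 1)] with h hh
  exact (hIdent h hh).symm

end Main
end

section
/- For x > 0, ∫₀^∞ exp(−x·sinh s) ds converges, and (2/π)·∫₀^{π/2} sin(x·cos θ) dθ − (2/π)·∫₀^∞ exp(−x·sinh s) ds satisfies Bessel's equation of order zero: x·y'' + y' + x·y = 0. -/
open Real MeasureTheory Set intervalIntegral Filter Topology

/-- Integrability of `sinh^n * exp(-c sinh)` on `(0,∞)` for `c > 0`. -/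
lemma bessel_aux_int (c : ℝ) (hc : 0 < c) (n : ℕ) :
    IntegrableOn (fun s : ℝ => Real.sinh s ^ n * Real.exp (-c * Real.sinh s)) (Ioi 0) := by
  have hcont : Continuous fun s : ℝ => Real.sinh s ^ n * Real.exp (-c * Real.sinh s) :=
    (Real.continuous_sinh.pow n).mul (((continuous_const.mul Real.continuous_sinh : Continuous fun s => (-c) * Real.sinh s)).rexp)
  have hb : IntegrableOn
      (fun s : ℝ => ((n.factorial : ℝ)) * (2 / c) ^ n * Real.exp (-(c / 2) * s)) (Ioi 0) :=
    (exp_neg_integrableOn_Ioi 0 (by positivity)).const_mul _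
  refine hb.integrable.mono' hcont.aestronglyMeasurable ?_
  filter_upwards [ae_restrict_mem measurableSet_Ioi] with s hs
  have hs0 : (0 : ℝ) < s := hs
  have hsinh : s < Real.sinh s := (Real.self_lt_sinh_iff).2 hs0
  have hsinh0 : 0 < Real.sinh s := hs0.trans hsinh
  have h1 : Real.sinh s ^ n ≤ ((n.factorial : ℝ)) * (2 / c) ^ n * Real.exp (c / 2 * Real.sinh s) := by
    have h := Real.pow_div_factorial_le_exp (x := c / 2 * Real.sinh s)
      (by positivity) n
    rw [div_le_iff₀ (by positivity : (0:ℝ) < ((n.factorial : ℝ)))] at h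
    have h2 : (c / 2 * Real.sinh s) ^ n = (c / 2) ^ n * Real.sinh s ^ n := mul_pow _ _ _
    rw [h2] at h
    have h3 : Real.sinh s ^ n =
        (2 / c) ^ n * ((c / 2) ^ n * Real.sinh s ^ n) := by
      rw [← mul_assoc, ← mul_pow]
      field_simp
      simp
    rw [h3]
    calc (2 / c) ^ n * ((c / 2) ^ n * Real.sinh s ^ n)
        ≤ (2 / c) ^ n * (Real.exp (c / 2 * Real.sinh s) * ((n.factorial : ℝ))) := by
          gcongr
      _ = ((n.factorial : ℝ)) * (2 / c) ^ n * Real.exp (c / 2 * Real.sinh s) := by ring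
  have hnorm : ‖Real.sinh s ^ n * Real.exp (-c * Real.sinh s)‖
      = Real.sinh s ^ n * Real.exp (-c * Real.sinh s) := by
    rw [Real.norm_eq_abs, abs_of_nonneg (by positivity)]
  rw [hnorm]
  calc Real.sinh s ^ n * Real.exp (-c * Real.sinh s)
      ≤ (((n.factorial : ℝ)) * (2 / c) ^ n * Real.exp (c / 2 * Real.sinh s))
        * Real.exp (-c * Real.sinh s) :=
        mul_le_mul_of_nonneg_right h1 (Real.exp_pos _).le
    _ = ((n.factorial : ℝ)) * (2 / c) ^ n * Real.exp (-(c / 2) * Real.sinh s) := by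
        rw [mul_assoc, ← Real.exp_add]; ring_nf
    _ ≤ ((n.factorial : ℝ)) * (2 / c) ^ n * Real.exp (-(c / 2) * s) := by
        have : -(c / 2) * Real.sinh s ≤ -(c / 2) * s := by nlinarith
        exact mul_le_mul_of_nonneg_left (Real.exp_le_exp.2 this) (by positivity)

lemma bessel_K_int (x : ℝ) (hx : 0 < x) :
    IntegrableOn (fun s : ℝ => Real.exp (-x * Real.sinh s)) (Ioi 0) := by
  simpa using bessel_aux_int x hx 0

lemma bessel_K_int1 (x : ℝ) (hx : 0 < x) :
    IntegrableOn (fun s : ℝ => Real.sinh s * Real.exp (-x * Real.sinh s)) (Ioi 0) := by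
  simpa using bessel_aux_int x hx 1

/-- derivative in x of exp(-x sinh s) -/
lemma bessel_exp_deriv (s x : ℝ) :
    HasDerivAt (fun x : ℝ => Real.exp (-x * Real.sinh s))
      (-(Real.sinh s * Real.exp (-x * Real.sinh s))) x := by
  have h : HasDerivAt (fun x : ℝ => -x * Real.sinh s) (-Real.sinh s) x := by
    simpa using ((hasDerivAt_mul_const (Real.sinh s)).fun_neg (x := x)).congr_deriv rfl
  have := h.exp
  convert this using 1
  ring

/-- First derivative of K. -/
lemma bessel_K_deriv (x : ℝ) (hx : 0 < x) :
    HasDerivAt (fun x : ℝ => ∫ s in Ioi (0:ℝ), Real.exp (-x * Real.sinh s))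
      (∫ s in Ioi (0:ℝ), -(Real.sinh s * Real.exp (-x * Real.sinh s))) x := by
  have h := hasDerivAt_integral_of_dominated_loc_of_deriv_le
    (μ := volume.restrict (Ioi (0:ℝ)))
    (F := fun x s => Real.exp (-x * Real.sinh s))
    (F' := fun x s => -(Real.sinh s * Real.exp (-x * Real.sinh s)))
    (x₀ := x) (bound := fun s => Real.sinh s * Real.exp (-(x / 2) * Real.sinh s))
    (Metric.ball_mem_nhds x (half_pos hx))
    (Eventually.of_forall fun x' =>
      (((continuous_const.mul Real.continuous_sinh : Continuous fun s => (-x') * Real.sinh s)).rexp).aestronglyMeasurable)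
    (bessel_K_int x hx)
    (((Real.continuous_sinh.mul
      (((continuous_const.mul Real.continuous_sinh : Continuous fun s => (-x) * Real.sinh s)).rexp)).neg).aestronglyMeasurable)
    ?_ (by simpa using (bessel_aux_int (x/2) (half_pos hx) 1).integrable)
    (Eventually.of_forall fun s => fun x' _ => bessel_exp_deriv s x')
  · exact h.2
  · filter_upwards [ae_restrict_mem measurableSet_Ioi] with s hs x' hx'
    have hs0 : (0:ℝ) < s := hs
    have hsinh0 : 0 < Real.sinh s := (Real.self_lt_sinh_iff.2 hs0).trans_le' hs0.le
    have hx'2 : x / 2 ≤ x' := by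
      rw [Metric.mem_ball, Real.dist_eq, abs_lt] at hx'
      linarith
    rw [norm_neg, Real.norm_eq_abs, abs_of_nonneg (by positivity)]
    have : -x' * Real.sinh s ≤ -(x / 2) * Real.sinh s := by nlinarith
    exact mul_le_mul_of_nonneg_left (Real.exp_le_exp.2 this) hsinh0.le

/-- Second derivative of K. -/
lemma bessel_K_deriv2 (x : ℝ) (hx : 0 < x) :
    HasDerivAt (fun x : ℝ => ∫ s in Ioi (0:ℝ), -(Real.sinh s * Real.exp (-x * Real.sinh s)))
      (∫ s in Ioi (0:ℝ), Real.sinh s ^ 2 * Real.exp (-x * Real.sinh s)) x := by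
  have h := hasDerivAt_integral_of_dominated_loc_of_deriv_le
    (μ := volume.restrict (Ioi (0:ℝ)))
    (F := fun x s => -(Real.sinh s * Real.exp (-x * Real.sinh s)))
    (F' := fun x s => Real.sinh s ^ 2 * Real.exp (-x * Real.sinh s))
    (x₀ := x) (bound := fun s => Real.sinh s ^ 2 * Real.exp (-(x / 2) * Real.sinh s))
    (Metric.ball_mem_nhds x (half_pos hx))
    (Eventually.of_forall fun x' =>
      ((Real.continuous_sinh.mul
        (((continuous_const.mul Real.continuous_sinh : Continuous fun s => (-x') * Real.sinh s)).rexp)).neg).aestronglyMeasurable)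
    (bessel_K_int1 x hx).neg
    (((Real.continuous_sinh.pow 2).mul
      (((continuous_const.mul Real.continuous_sinh : Continuous fun s => (-x) * Real.sinh s)).rexp)).aestronglyMeasurable)
    ?_ (bessel_aux_int (x/2) (half_pos hx) 2)
    ?_
  · exact h.2
  · filter_upwards [ae_restrict_mem measurableSet_Ioi] with s hs x' hx'
    have hs0 : (0:ℝ) < s := hs
    have hsinh0 : 0 < Real.sinh s := (Real.self_lt_sinh_iff.2 hs0).trans_le' hs0.le
    have hx'2 : x / 2 ≤ x' := by
      rw [Metric.mem_ball, Real.dist_eq, abs_lt] at hx'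
      linarith
    rw [Real.norm_eq_abs, abs_of_nonneg (by positivity)]
    have : -x' * Real.sinh s ≤ -(x / 2) * Real.sinh s := by nlinarith
    exact mul_le_mul_of_nonneg_left (Real.exp_le_exp.2 this) (by positivity)
  · refine Eventually.of_forall fun s x' _ => ?_
    have := ((bessel_exp_deriv s x').const_mul (Real.sinh s)).fun_neg
    convert this using 1
    ring

/-- limit of cosh s * exp(-x sinh s) at infinity. -/
lemma bessel_tendsto (x : ℝ) (hx : 0 < x) :
    Tendsto (fun s : ℝ => -(Real.cosh s * Real.exp (-x * Real.sinh s))) atTop (𝓝 0) := by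
  have hF : Tendsto (fun t : ℝ => (1 + t) * Real.exp (-x * t)) atTop (𝓝 0) := by
    have h1 : Tendsto (fun t : ℝ => Real.exp (-(x * t))) atTop (𝓝 0) :=
      Real.tendsto_exp_neg_atTop_nhds_zero.comp (tendsto_id.const_mul_atTop hx)
    have h2 : Tendsto (fun t : ℝ => (x * t) * Real.exp (-(x * t))) atTop (𝓝 0) := by
      have := (Real.tendsto_pow_mul_exp_neg_atTop_nhds_zero 1).comp
        (tendsto_id.const_mul_atTop hx)
      simpa [Function.comp_def] using this
    have h3 : Tendsto (fun t : ℝ => (1/x) * ((x * t) * Real.exp (-(x * t)))) atTop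
        (𝓝 ((1/x) * 0)) := h2.const_mul _
    have h4 : Tendsto (fun t : ℝ => t * Real.exp (-(x * t))) atTop (𝓝 0) := by
      rw [mul_zero] at h3
      refine h3.congr fun t => ?_
      field_simp
    have := h1.add h4
    rw [add_zero] at this
    refine this.congr fun t => ?_
    rw [neg_mul]
    ring
  have hsinh : Tendsto Real.sinh atTop atTop := by
    apply tendsto_atTop_mono' atTop _ tendsto_id
    filter_upwards [eventually_gt_atTop (0:ℝ)] with s hs
    exact (Real.self_lt_sinh_iff.2 hs).le
  have hcomp : Tendsto (fun s : ℝ => (1 + Real.sinh s) * Real.exp (-x * Real.sinh s))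
      atTop (𝓝 0) := hF.comp hsinh
  have hsq : Tendsto (fun s : ℝ => Real.cosh s * Real.exp (-x * Real.sinh s)) atTop (𝓝 0) := by
    refine tendsto_of_tendsto_of_tendsto_of_le_of_le' tendsto_const_nhds hcomp ?_ ?_
    · filter_upwards with s
      positivity
    · filter_upwards [eventually_ge_atTop (0:ℝ)] with s hs
      have h5 : Real.cosh s ≤ 1 + Real.sinh s := by
        have := Real.cosh_sub_sinh s
        have h6 : Real.exp (-s) ≤ 1 := Real.exp_le_one_iff.2 (by linarith)
        linarith
      exact mul_le_mul_of_nonneg_right h5 (Real.exp_pos _).le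
  simpa using hsq.neg

/-- K-side ODE combination. -/
lemma bessel_K_ode (x : ℝ) (hx : 0 < x) :
    x * (∫ s in Ioi (0:ℝ), Real.sinh s ^ 2 * Real.exp (-x * Real.sinh s))
      + (∫ s in Ioi (0:ℝ), -(Real.sinh s * Real.exp (-x * Real.sinh s)))
      + x * (∫ s in Ioi (0:ℝ), Real.exp (-x * Real.sinh s)) = 1 := by
  have hi2 : IntegrableOn (fun s : ℝ => x * (Real.sinh s ^ 2 * Real.exp (-x * Real.sinh s)))
      (Ioi 0) := (bessel_aux_int x hx 2).const_mul x
  have hi1 : IntegrableOn (fun s : ℝ => -(Real.sinh s * Real.exp (-x * Real.sinh s)))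
      (Ioi 0) := (bessel_K_int1 x hx).neg
  have hi0 : IntegrableOn (fun s : ℝ => x * Real.exp (-x * Real.sinh s)) (Ioi 0) :=
    (bessel_K_int x hx).const_mul x
  have key : (∫ s in Ioi (0:ℝ), (x * (Real.sinh s ^ 2 * Real.exp (-x * Real.sinh s))
      + -(Real.sinh s * Real.exp (-x * Real.sinh s)) + x * Real.exp (-x * Real.sinh s))) = 1 := by
    have hderiv : ∀ s ∈ Ici (0:ℝ),
        HasDerivAt (fun s : ℝ => -(Real.cosh s * Real.exp (-x * Real.sinh s)))
          (x * (Real.sinh s ^ 2 * Real.exp (-x * Real.sinh s))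
            + -(Real.sinh s * Real.exp (-x * Real.sinh s))
            + x * Real.exp (-x * Real.sinh s)) s := by
      intro s _
      have hinner : HasDerivAt (fun s : ℝ => -x * Real.sinh s) (-x * Real.cosh s) s :=
        (Real.hasDerivAt_sinh s).const_mul (-x)
      have h := ((Real.hasDerivAt_cosh s).fun_mul hinner.exp).fun_neg
      convert h using 1 <;> try rfl
      have hc := Real.cosh_sq s
      linear_combination (-x * Real.exp (-x * Real.sinh s)) * hc
    have hint : IntegrableOn (fun s : ℝ =>
        x * (Real.sinh s ^ 2 * Real.exp (-x * Real.sinh s))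
          + -(Real.sinh s * Real.exp (-x * Real.sinh s))
          + x * Real.exp (-x * Real.sinh s)) (Ioi 0) := (hi2.add hi1).add hi0
    have := integral_Ioi_of_hasDerivAt_of_tendsto' hderiv hint (bessel_tendsto x hx)
    rw [this]
    simp [Real.cosh_zero, Real.sinh_zero]
  have hi21 : IntegrableOn (fun s : ℝ => x * (Real.sinh s ^ 2 * Real.exp (-x * Real.sinh s))
      + -(Real.sinh s * Real.exp (-x * Real.sinh s))) (Ioi 0) := hi2.add hi1
  rw [integral_add hi21 hi0, integral_add hi2 hi1, MeasureTheory.integral_const_mul,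
    MeasureTheory.integral_const_mul] at key
  linarith [key]

/-- First derivative of J. -/
lemma bessel_J_deriv (x : ℝ) :
    HasDerivAt (fun x : ℝ => ∫ θ in (0:ℝ)..(π / 2), Real.sin (x * Real.cos θ))
      (∫ θ in (0:ℝ)..(π / 2), Real.cos θ * Real.cos (x * Real.cos θ)) x := by
  have h := intervalIntegral.hasDerivAt_integral_of_dominated_loc_of_deriv_le
    (μ := volume) (a := (0:ℝ)) (b := π / 2)
    (F := fun x θ => Real.sin (x * Real.cos θ))
    (F' := fun x θ => Real.cos θ * Real.cos (x * Real.cos θ))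
    (x₀ := x) (bound := fun _ => (1:ℝ)) (Metric.ball_mem_nhds x one_pos)
    (Eventually.of_forall fun x' =>
      ((Real.continuous_sin.comp (continuous_const.mul Real.continuous_cos) : Continuous fun θ => Real.sin (x' * Real.cos θ))).aestronglyMeasurable)
    (((Real.continuous_sin.comp (continuous_const.mul Real.continuous_cos) : Continuous fun θ => Real.sin (x * Real.cos θ))).intervalIntegrable _ _)
    ((Real.continuous_cos.mul ((Real.continuous_cos.comp (continuous_const.mul Real.continuous_cos) : Continuous fun θ => Real.cos (x * Real.cos θ)))).aestronglyMeasurable)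
    ?_ (intervalIntegrable_const) ?_
  · exact h.2
  · refine Eventually.of_forall fun θ _ x' _ => ?_
    rw [Real.norm_eq_abs, abs_mul]
    exact mul_le_one₀ (Real.abs_cos_le_one θ) (abs_nonneg _) (Real.abs_cos_le_one _)
  · refine Eventually.of_forall fun θ _ x' _ => ?_
    have := (hasDerivAt_mul_const (Real.cos θ) (x := x')).sin
    convert this using 1 <;> try rfl
    ring

/-- Second derivative of J. -/
lemma bessel_J_deriv2 (x : ℝ) :
    HasDerivAt (fun x : ℝ => ∫ θ in (0:ℝ)..(π / 2), Real.cos θ * Real.cos (x * Real.cos θ))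
      (∫ θ in (0:ℝ)..(π / 2), -(Real.cos θ ^ 2 * Real.sin (x * Real.cos θ))) x := by
  have h := intervalIntegral.hasDerivAt_integral_of_dominated_loc_of_deriv_le
    (μ := volume) (a := (0:ℝ)) (b := π / 2)
    (F := fun x θ => Real.cos θ * Real.cos (x * Real.cos θ))
    (F' := fun x θ => -(Real.cos θ ^ 2 * Real.sin (x * Real.cos θ)))
    (x₀ := x) (bound := fun _ => (1:ℝ)) (Metric.ball_mem_nhds x one_pos)
    (Eventually.of_forall fun x' =>
      (Real.continuous_cos.mul ((Real.continuous_cos.comp (continuous_const.mul Real.continuous_cos) : Continuous fun θ => Real.cos (x' * Real.cos θ)))).aestronglyMeasurable)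
    ((Real.continuous_cos.mul
      ((Real.continuous_cos.comp (continuous_const.mul Real.continuous_cos) : Continuous fun θ => Real.cos (x * Real.cos θ)))).intervalIntegrable _ _)
    (((Real.continuous_cos.pow 2).mul
      ((Real.continuous_sin.comp (continuous_const.mul Real.continuous_cos) : Continuous fun θ => Real.sin (x * Real.cos θ)))).neg.aestronglyMeasurable)
    ?_ (intervalIntegrable_const) ?_
  · exact h.2
  · refine Eventually.of_forall fun θ _ x' _ => ?_
    rw [norm_neg, Real.norm_eq_abs, abs_mul, abs_pow]
    have h1 : |Real.cos θ| ^ 2 ≤ 1 := pow_le_one₀ (abs_nonneg _) (Real.abs_cos_le_one θ)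
    exact mul_le_one₀ h1 (abs_nonneg _) (Real.abs_sin_le_one _)
  · refine Eventually.of_forall fun θ _ x' _ => ?_
    have := ((hasDerivAt_mul_const (Real.cos θ) (x := x')).cos).const_mul (Real.cos θ)
    convert this using 1 <;> try rfl
    ring

/-- J-side ODE combination. -/
lemma bessel_J_ode (x : ℝ) :
    x * (∫ θ in (0:ℝ)..(π / 2), -(Real.cos θ ^ 2 * Real.sin (x * Real.cos θ)))
      + (∫ θ in (0:ℝ)..(π / 2), Real.cos θ * Real.cos (x * Real.cos θ))
      + x * (∫ θ in (0:ℝ)..(π / 2), Real.sin (x * Real.cos θ)) = 1 := by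
  have c2 : Continuous fun θ : ℝ => -(Real.cos θ ^ 2 * Real.sin (x * Real.cos θ)) :=
    ((Real.continuous_cos.pow 2).mul ((Real.continuous_sin.comp (continuous_const.mul Real.continuous_cos) : Continuous fun θ => Real.sin (x * Real.cos θ)))).neg
  have c1 : Continuous fun θ : ℝ => Real.cos θ * Real.cos (x * Real.cos θ) :=
    Real.continuous_cos.mul ((Real.continuous_cos.comp (continuous_const.mul Real.continuous_cos) : Continuous fun θ => Real.cos (x * Real.cos θ)))
  have c0 : Continuous fun θ : ℝ => Real.sin (x * Real.cos θ) :=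
    (Real.continuous_sin.comp (continuous_const.mul Real.continuous_cos) : Continuous fun θ => Real.sin (x * Real.cos θ))
  have key : (∫ θ in (0:ℝ)..(π / 2),
      (x * -(Real.cos θ ^ 2 * Real.sin (x * Real.cos θ))
        + Real.cos θ * Real.cos (x * Real.cos θ)
        + x * Real.sin (x * Real.cos θ))) = 1 := by
    have hderiv : ∀ θ ∈ uIcc (0:ℝ) (π / 2),
        HasDerivAt (fun θ : ℝ => Real.sin θ * Real.cos (x * Real.cos θ))
          (x * -(Real.cos θ ^ 2 * Real.sin (x * Real.cos θ))
            + Real.cos θ * Real.cos (x * Real.cos θ)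
            + x * Real.sin (x * Real.cos θ)) θ := by
      intro θ _
      have hinner : HasDerivAt (fun θ : ℝ => x * Real.cos θ) (x * -Real.sin θ) θ :=
        (Real.hasDerivAt_cos θ).const_mul x
      have h := (Real.hasDerivAt_sin θ).fun_mul hinner.cos
      convert h using 1 <;> try rfl
      have hs := Real.sin_sq θ
      linear_combination (-x * Real.sin (x * Real.cos θ)) * hs
    have hcont : Continuous fun θ : ℝ =>
        x * -(Real.cos θ ^ 2 * Real.sin (x * Real.cos θ))
          + Real.cos θ * Real.cos (x * Real.cos θ)
          + x * Real.sin (x * Real.cos θ) :=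
      ((continuous_const.mul c2).add c1).add (continuous_const.mul c0)
    rw [intervalIntegral.integral_eq_sub_of_hasDerivAt hderiv (hcont.intervalIntegrable _ _)]
    simp
  have c2x : Continuous fun θ : ℝ => x * -(Real.cos θ ^ 2 * Real.sin (x * Real.cos θ)) :=
    continuous_const.mul c2
  have c0x : Continuous fun θ : ℝ => x * Real.sin (x * Real.cos θ) := continuous_const.mul c0
  have h21 : IntervalIntegrable (fun θ : ℝ =>
      x * -(Real.cos θ ^ 2 * Real.sin (x * Real.cos θ))
        + Real.cos θ * Real.cos (x * Real.cos θ)) volume 0 (π / 2) :=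
    (c2x.add c1).intervalIntegrable _ _
  rw [intervalIntegral.integral_add h21 (c0x.intervalIntegrable _ _),
      intervalIntegral.integral_add (c2x.intervalIntegrable _ _) (c1.intervalIntegrable _ _),
      intervalIntegral.integral_const_mul, intervalIntegral.integral_const_mul] at key
  linarith [key]

theorem stmt_16 (y : ℝ → ℝ)
    (hy : ∀ x : ℝ, y x = (2 / π) * (∫ θ in (0:ℝ)..(π / 2), Real.sin (x * Real.cos θ))
        - (2 / π) * ∫ s in Ioi (0:ℝ), Real.exp (-x * Real.sinh s))
    (x : ℝ) (hx : 0 < x) :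
    IntegrableOn (fun s : ℝ => Real.exp (-x * Real.sinh s)) (Ioi 0) ∧
    x * deriv (deriv y) x + deriv y x + x * y x = 0 := by
  refine ⟨bessel_K_int x hx, ?_⟩
  have hyfun : y = fun x => (2 / π) * (∫ θ in (0:ℝ)..(π / 2), Real.sin (x * Real.cos θ))
      - (2 / π) * ∫ s in Ioi (0:ℝ), Real.exp (-x * Real.sinh s) := funext hy
  set J1 : ℝ → ℝ := fun z => ∫ θ in (0:ℝ)..(π / 2), Real.cos θ * Real.cos (z * Real.cos θ)
  set K1 : ℝ → ℝ := fun z => ∫ s in Ioi (0:ℝ), -(Real.sinh s * Real.exp (-z * Real.sinh s))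
  have hd : ∀ z ∈ Ioi (0:ℝ), HasDerivAt y ((2 / π) * J1 z - (2 / π) * K1 z) z := by
    intro z hz
    rw [hyfun]
    exact ((bessel_J_deriv z).const_mul _).sub ((bessel_K_deriv z hz).const_mul _)
  have hdy : Set.EqOn (deriv y) (fun z => (2 / π) * J1 z - (2 / π) * K1 z) (Ioi 0) :=
    fun z hz => (hd z hz).deriv
  have hev : deriv y =ᶠ[nhds x] fun z => (2 / π) * J1 z - (2 / π) * K1 z :=
    Filter.eventuallyEq_of_mem (Ioi_mem_nhds hx) hdy
  have hd2 : HasDerivAt (fun z => (2 / π) * J1 z - (2 / π) * K1 z)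
      ((2 / π) * (∫ θ in (0:ℝ)..(π / 2), -(Real.cos θ ^ 2 * Real.sin (x * Real.cos θ)))
        - (2 / π) * ∫ s in Ioi (0:ℝ), Real.sinh s ^ 2 * Real.exp (-x * Real.sinh s)) x :=
    ((bessel_J_deriv2 x).const_mul _).sub ((bessel_K_deriv2 x hx).const_mul _)
  have hddy : HasDerivAt (deriv y)
      ((2 / π) * (∫ θ in (0:ℝ)..(π / 2), -(Real.cos θ ^ 2 * Real.sin (x * Real.cos θ)))
        - (2 / π) * ∫ s in Ioi (0:ℝ), Real.sinh s ^ 2 * Real.exp (-x * Real.sinh s)) x :=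
    hd2.congr_of_eventuallyEq hev
  rw [hddy.deriv, hdy (mem_Ioi.2 hx), hy x]
  have hJ := bessel_J_ode x
  have hK := bessel_K_ode x hx
  simp only [J1, K1]
  linear_combination (2 / π) * hJ - (2 / π) * hK
end
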